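/- Let 1 ≤ k ≤ n be integers. (a) The linear map j : ℝ^k → ℝ^n sending α to Σ_{i=1}^k α_i e_i is an isometric embedding of (ℝ^k, ℓ_∞) into (ℝ^n, (T^(k))*), i.e. (T^(k))*(j(α)) = ‖α‖_∞ for all α ∈ ℝ^k. (b) Let m = ⌊n/k⌋ and let B_1, ..., B_m be pairwise disjoint subsets of [n] each of size k; the linear map j' : ℝ^m → ℝ^n sending α to the vector whose coordinates on B_j all equal α_j / k and which vanishes elsewhere is an isometric embedding of (ℝ^m, ℓ_∞) into (ℝ^n, T^(k)), i.e. ‖j'(α)‖_{T^(k)} = ‖α‖_∞ for all α ∈ ℝ^m. -/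
import Mathlib


noncomputable section
open scoped BigOperators

/-- The dual norm `N*(w) = sup {⟨v,w⟩ : N(v) ≤ 1}`. -/
def dualNorm {n : ℕ} (N : (Fin n → ℝ) → ℝ) (w : Fin n → ℝ) : ℝ :=
  sSup {t | ∃ v, N v ≤ 1 ∧ t = ∑ i, v i * w i}

/-- The top-`k` norm: the sum of the `k` largest among `|v₁|, …, |vₙ|`. -/
def topkNorm (n k : ℕ) (v : Fin n → ℝ) : ℝ :=
  sSup {t | ∃ S : Finset (Fin n), S.card = k ∧ t = ∑ i ∈ S, |v i|}

lemma topk_bddAbove (n k : ℕ) (v : Fin n → ℝ) :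
    BddAbove {t | ∃ S : Finset (Fin n), S.card = k ∧ t = ∑ i ∈ S, |v i|} := by
  refine ⟨∑ i, |v i|, ?_⟩
  rintro t ⟨S, hS, rfl⟩
  exact Finset.sum_le_sum_of_subset_of_nonneg (Finset.subset_univ S)
    (fun i _ _ => abs_nonneg _)

lemma topk_nonempty {n k : ℕ} (hkn : k ≤ n) (v : Fin n → ℝ) :
    Set.Nonempty {t | ∃ S : Finset (Fin n), S.card = k ∧ t = ∑ i ∈ S, |v i|} := by
  obtain ⟨S, -, hS⟩ :=
    Finset.exists_subset_card_eq (s := (Finset.univ : Finset (Fin n))) (by simpa using hkn)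
  exact ⟨_, S, hS, rfl⟩

lemma sum_le_topk {n k : ℕ} (v : Fin n → ℝ) (S : Finset (Fin n)) (hS : S.card = k) :
    ∑ i ∈ S, |v i| ≤ topkNorm n k v :=
  le_csSup (topk_bddAbove n k v) ⟨S, hS, rfl⟩

/-- (a) `α ↦ ∑_{i<k} αᵢ eᵢ` is an isometric embedding of `ℓ_∞^k` into `((T^{(k)})*)` on
`ℝⁿ`; (b) for pairwise disjoint `B₁, …, B_m ⊆ [n]` of size `k` (`m = ⌊n/k⌋`), the map
sending `α` to the vector equal to `αⱼ/k` on `Bⱼ` and `0` elsewhere is an isometric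
embedding of `ℓ_∞^m` into `(ℝⁿ, T^{(k)})`. -/
theorem linfty_embeds_into_topk_and_dual {n k : ℕ} (hk : 1 ≤ k) (hkn : k ≤ n) :
    (∀ α : Fin k → ℝ,
      dualNorm (topkNorm n k)
          (fun i : Fin n => if h : (i : ℕ) < k then α ⟨i, h⟩ else 0)
        = ⨆ i, |α i|) ∧
    (∀ m : ℕ, m = n / k →
      ∀ B : Fin m → Finset (Fin n),
        (∀ j, (B j).card = k) →
        (∀ j j', j ≠ j' → Disjoint (B j) (B j')) →
        ∀ (α : Fin m → ℝ) (u : Fin n → ℝ),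
          (∀ j, ∀ i ∈ B j, u i = α j / k) →
          (∀ i : Fin n, (∀ j, i ∉ B j) → u i = 0) →
          topkNorm n k u = ⨆ j, |α j|) := by
  constructor
  · -- Part (a)
    intro α
    set w : Fin n → ℝ := fun i : Fin n => if h : (i : ℕ) < k then α ⟨i, h⟩ else 0 with hw
    have : Nonempty (Fin k) := ⟨⟨0, hk⟩⟩
    obtain ⟨i₀, hi₀⟩ := Finite.exists_max (fun i => |α i|)
    have hM : (⨆ i, |α i|) = |α i₀| :=
      le_antisymm (ciSup_le hi₀)
        (le_ciSup (f := fun i => |α i|) (Set.Finite.bddAbove (Set.finite_range _)) i₀)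
    rw [hM]
    set c : Fin n := Fin.castLE hkn i₀ with hc
    set v₀ : Fin n → ℝ := fun i => if i = c then (if α i₀ < 0 then (-1:ℝ) else 1) else 0 with hv₀
    have hv₀abs : ∀ i, |v₀ i| = if i = c then (1:ℝ) else 0 := by
      intro i
      by_cases h : i = c <;> simp [hv₀, h] <;> split <;> norm_num
    have hsum_abs : ∀ S : Finset (Fin n), ∑ i ∈ S, |v₀ i| ≤ 1 := by
      intro S
      calc ∑ i ∈ S, |v₀ i| ≤ ∑ i, |v₀ i| :=
            Finset.sum_le_sum_of_subset_of_nonneg (Finset.subset_univ S)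
              (fun i _ _ => abs_nonneg _)
        _ = 1 := by simp [hv₀abs]
    have hv₀norm : topkNorm n k v₀ ≤ 1 := by
      apply csSup_le (topk_nonempty hkn v₀)
      rintro t ⟨S, hS, rfl⟩
      exact hsum_abs S
    have hwc : w c = α i₀ := by
      have hlt : (c : ℕ) < k := by simpa [hc] using i₀.isLt
      simp only [hw]
      rw [dif_pos hlt]
      congr 1
    have hdot : ∑ i, v₀ i * w i = |α i₀| := by
      have : ∀ i, v₀ i * w i = if i = c then (if α i₀ < 0 then (-1:ℝ) else 1) * w c else 0 := by
        intro i
        by_cases h : i = c <;> simp [hv₀, h]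
      rw [Finset.sum_congr rfl (fun i _ => this i), Finset.sum_ite_eq' Finset.univ c,
        if_pos (Finset.mem_univ c), hwc]
      by_cases hneg : α i₀ < 0
      · rw [if_pos hneg, abs_of_neg hneg]; ring
      · rw [if_neg hneg, abs_of_nonneg (not_lt.mp hneg)]; ring
    apply IsGreatest.csSup_eq
    constructor
    · exact ⟨v₀, hv₀norm, hdot.symm⟩
    · rintro t ⟨v, hv, rfl⟩
      set Sk : Finset (Fin n) := Finset.map (Fin.castLEEmb hkn) Finset.univ with hSk
      have hSkcard : Sk.card = k := by simp [hSk]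
      have hmemSk : ∀ i : Fin n, i ∈ Sk ↔ (i : ℕ) < k := by
        intro i
        simp only [hSk, Finset.mem_map, Finset.mem_univ, true_and]
        constructor
        · rintro ⟨j, rfl⟩; exact j.isLt
        · intro h; exact ⟨⟨i, h⟩, rfl⟩
      have hstep : ∑ i, v i * w i = ∑ i ∈ Sk, v i * w i := by
        refine (Finset.sum_subset (Finset.subset_univ Sk) ?_).symm
        intro i _ hi
        have : ¬ (i : ℕ) < k := fun h => hi ((hmemSk i).mpr h)
        simp [hw, this]
      have habsw : ∀ i : Fin n, |w i| ≤ |α i₀| := by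
        intro i
        simp only [hw]
        split
        · exact hi₀ _
        · simp
      calc ∑ i, v i * w i = ∑ i ∈ Sk, v i * w i := hstep
        _ ≤ ∑ i ∈ Sk, |v i| * |α i₀| := by
            refine Finset.sum_le_sum fun i _ => ?_
            calc v i * w i ≤ |v i * w i| := le_abs_self _
              _ = |v i| * |w i| := abs_mul _ _
              _ ≤ |v i| * |α i₀| := mul_le_mul_of_nonneg_left (habsw i) (abs_nonneg _)
        _ = (∑ i ∈ Sk, |v i|) * |α i₀| := by rw [Finset.sum_mul]
        _ ≤ 1 * |α i₀| := by
            apply mul_le_mul_of_nonneg_right _ (abs_nonneg _)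
            exact le_trans (sum_le_topk v Sk hSkcard) hv
        _ = |α i₀| := one_mul _
  · -- Part (b)
    intro m hm B hB hdisj α u hu hu0
    have hk0 : (0:ℝ) < (k:ℝ) := by exact_mod_cast hk
    have hmpos : 1 ≤ m := hm ▸ (Nat.one_le_div_iff (by omega)).mpr hkn
    have : Nonempty (Fin m) := ⟨⟨0, hmpos⟩⟩
    obtain ⟨j₀, hj₀⟩ := Finite.exists_max (fun j => |α j|)
    have hM : (⨆ j, |α j|) = |α j₀| :=
      le_antisymm (ciSup_le hj₀)
        (le_ciSup (f := fun j => |α j|) (Set.Finite.bddAbove (Set.finite_range _)) j₀)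
    rw [hM]
    have hmem : |α j₀| = ∑ i ∈ B j₀, |u i| := by
      have : ∀ i ∈ B j₀, |u i| = |α j₀| / k := by
        intro i hi
        rw [hu j₀ i hi, abs_div, abs_of_pos hk0]
      rw [Finset.sum_congr rfl this, Finset.sum_const, hB j₀, nsmul_eq_mul]
      field_simp
    apply IsGreatest.csSup_eq
    constructor
    · exact ⟨B j₀, hB j₀, hmem⟩
    · rintro t ⟨S, hS, rfl⟩
      have hbound : ∀ i ∈ S, |u i| ≤ |α j₀| / k := by
        intro i _
        by_cases hcase : ∃ j, i ∈ B j
        · obtain ⟨j, hj⟩ := hcase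
          rw [hu j i hj, abs_div, abs_of_pos hk0]
          exact div_le_div_of_nonneg_right (hj₀ j) hk0.le
        · rw [hu0 i (by push_neg at hcase; exact hcase), abs_zero]
          positivity
      calc ∑ i ∈ S, |u i| ≤ ∑ i ∈ S, |α j₀| / k := Finset.sum_le_sum hbound
        _ = k * (|α j₀| / k) := by rw [Finset.sum_const, hS, nsmul_eq_mul]
        _ = |α j₀| := by field_simp
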